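/- Let ν > 0, s ∈ {1, −1}, y₀ ∈ ℝ. For (x̂, t) ∈ ℝ² define φ(x̂,t) = 2ν(x̂ + t/(4ν²) − y₀), û(x̂,t) = −(s/ν)/cosh(φ(x̂,t)), p(x̂,t) = 2·tanh²(φ(x̂,t)) − 1, and x(x̂,t) = x̂ + (1/ν)(1 − tanh(φ(x̂,t))). Then at every point (x̂,t): (i) ∂_{x̂} x = p; (ii) ∂_t x = −(1/2)·û²; (iii) p² + (∂_{x̂} û)² = 1; (iv) ∂_t p = −(1/2)·∂_{x̂}(û²). -/

import Mathlib

/-- The phase `φ(x̂,t) = 2ν(x̂ + t/(4ν²) − y₀)` of the one-soliton. -/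
noncomputable def solPhi (ν y₀ xh t : ℝ) : ℝ := 2 * ν * (xh + t / (4 * ν ^ 2) - y₀)

/-- The one-soliton profile `û(x̂,t) = −(s/ν)/cosh φ`. -/
noncomputable def solU (ν s y₀ xh t : ℝ) : ℝ := -(s / ν) / Real.cosh (solPhi ν y₀ xh t)

/-- `p(x̂,t) = 2 tanh²φ − 1`. -/
noncomputable def solP (ν y₀ xh t : ℝ) : ℝ := 2 * Real.tanh (solPhi ν y₀ xh t) ^ 2 - 1

/-- The parametrized spatial variable `x(x̂,t) = x̂ + (1/ν)(1 − tanh φ)`. -/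
noncomputable def solX (ν y₀ xh t : ℝ) : ℝ :=
  xh + (1 / ν) * (1 - Real.tanh (solPhi ν y₀ xh t))

private lemma hasDerivAt_tanhR (x : ℝ) :
    HasDerivAt Real.tanh (1 / Real.cosh x ^ 2) x := by
  have h := (Real.hasDerivAt_sinh x).div (Real.hasDerivAt_cosh x) (Real.cosh_pos x).ne'
  have hfun : Real.tanh = fun y => Real.sinh y / Real.cosh y :=
    funext Real.tanh_eq_sinh_div_cosh
  rw [hfun]
  refine h.congr_deriv ?_
  rw [show Real.cosh x * Real.cosh x - Real.sinh x * Real.sinh x = 1 by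
    nlinarith [Real.cosh_sq_sub_sinh_sq x]]

/-- The one-soliton of the short pulse equation satisfies, in parametric form:
`∂_x̂ x = p`, `∂_t x = −û²/2`, `p² + (∂_x̂ û)² = 1`, and `∂_t p = −(1/2)∂_x̂(û²)`. -/
theorem one_soliton_parametric_identities (ν s y₀ : ℝ) (hν : 0 < ν)
    (hs : s = 1 ∨ s = -1) :
    ∀ xh t : ℝ,
      deriv (fun y => solX ν y₀ y t) xh = solP ν y₀ xh t ∧
      deriv (fun τ => solX ν y₀ xh τ) t = -(1 / 2) * (solU ν s y₀ xh t) ^ 2 ∧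
      (solP ν y₀ xh t) ^ 2 + (deriv (fun y => solU ν s y₀ y t) xh) ^ 2 = 1 ∧
      deriv (fun τ => solP ν y₀ xh τ) t
        = -(1 / 2) * deriv (fun y => (solU ν s y₀ y t) ^ 2) xh := by
  intro xh t
  have hν0 : (ν : ℝ) ≠ 0 := hν.ne'
  set φ := solPhi ν y₀ xh t with hφ
  have hC : Real.cosh φ ≠ 0 := (Real.cosh_pos φ).ne'
  have hs2 : s ^ 2 = 1 := by rcases hs with h | h <;> simp [h]
  have hφx : HasDerivAt (fun y => solPhi ν y₀ y t) (2 * ν) xh := by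
    have : HasDerivAt (fun y : ℝ => 2 * ν * (y + t / (4 * ν ^ 2) - y₀))
        (2 * ν * 1) xh :=
      (((hasDerivAt_id xh).add_const _).sub_const _).const_mul (2 * ν)
    simpa [solPhi] using this
  have hφt : HasDerivAt (fun τ => solPhi ν y₀ xh τ) (1 / (2 * ν)) t := by
    have h1 : HasDerivAt (fun τ : ℝ => τ / (4 * ν ^ 2)) (1 / (4 * ν ^ 2)) t :=
      hasDerivAt_id' t |>.div_const (4 * ν ^ 2)
    have h2 : HasDerivAt (fun τ : ℝ => 2 * ν * (xh + τ / (4 * ν ^ 2) - y₀))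
        (2 * ν * (1 / (4 * ν ^ 2))) t :=
      ((h1.const_add xh).sub_const y₀).const_mul (2 * ν)
    have he : 2 * ν * (1 / (4 * ν ^ 2)) = 1 / (2 * ν) := by
      field_simp; ring
    rw [he] at h2
    exact h2
  have htx : HasDerivAt (fun y => Real.tanh (solPhi ν y₀ y t))
      (1 / Real.cosh φ ^ 2 * (2 * ν)) xh := by
    rw [hφ]; exact (hasDerivAt_tanhR _).comp xh hφx
  have htt : HasDerivAt (fun τ => Real.tanh (solPhi ν y₀ xh τ))
      (1 / Real.cosh φ ^ 2 * (1 / (2 * ν))) t := by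
    rw [hφ]; exact (hasDerivAt_tanhR _).comp t hφt
  have hXx : HasDerivAt (fun y => solX ν y₀ y t)
      (1 + (1 / ν) * (0 - 1 / Real.cosh φ ^ 2 * (2 * ν))) xh := by
    have := ((hasDerivAt_const xh (1:ℝ)).sub htx).const_mul (1 / ν)
    simpa [solX] using (hasDerivAt_id xh).fun_add this
  have hXt : HasDerivAt (fun τ => solX ν y₀ xh τ)
      ((1 / ν) * (0 - 1 / Real.cosh φ ^ 2 * (1 / (2 * ν)))) t := by
    have := ((hasDerivAt_const t (1:ℝ)).sub htt).const_mul (1 / ν)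
    simpa [solX] using (hasDerivAt_const t xh).fun_add this
  have hch : HasDerivAt (fun y => Real.cosh (solPhi ν y₀ y t))
      (Real.sinh φ * (2 * ν)) xh := by
    rw [hφ]; exact (Real.hasDerivAt_cosh _).comp xh hφx
  have hUx : HasDerivAt (fun y => solU ν s y₀ y t)
      ((0 * Real.cosh φ - (-(s / ν)) * (Real.sinh φ * (2 * ν))) / Real.cosh φ ^ 2) xh := by
    have := (hasDerivAt_const xh (-(s / ν))).fun_div hch hC
    rw [hφ]; simpa [solU] using this
  have hfP : (fun τ => solP ν y₀ xh τ)
      = fun τ => 2 * (Real.tanh (solPhi ν y₀ xh τ) * Real.tanh (solPhi ν y₀ xh τ)) - 1 := by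
    funext τ; rw [solP, sq]
  have hfU2 : (fun y => (solU ν s y₀ y t) ^ 2)
      = fun y => solU ν s y₀ y t * solU ν s y₀ y t := by
    funext y; rw [sq]
  have hT : Real.tanh φ = Real.sinh φ / Real.cosh φ := Real.tanh_eq_sinh_div_cosh φ
  have hS : Real.sinh φ ^ 2 = Real.cosh φ ^ 2 - 1 := by
    have := Real.cosh_sq_sub_sinh_sq φ; linarith
  refine ⟨?_, ?_, ?_, ?_⟩
  · rw [hXx.deriv, solP, hT]
    field_simp
    linear_combination (-2*ν) * hS
  · rw [hXt.deriv, solU]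
    simp only [← hφ]
    field_simp
    linear_combination hs2
  · rw [hUx.deriv, solP, hT]
    field_simp
    linear_combination (4*Real.sinh φ^2) * hS
      + (4*Real.sinh φ^2) * hs2
  · rw [hfP, hfU2, (((htt.fun_mul htt).const_mul (2:ℝ)).sub_const 1).deriv,
      (hUx.fun_mul hUx).deriv, solU, hT]
    simp only [← hφ]
    field_simp
    linear_combination (-4*Real.sinh φ) * hs2
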